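/- With the setup of the previous statement, every element f ∈ C decomposes as f = ∑_{j=0}^{n−1} θ_j(y)·f(x, ζ^j), where f(x, ζ^j) ∈ C_j denotes the element of R[x]/⟨x^m−1⟩ obtained by substituting ζ^j for y. Consequently, if for each j the ideal C_j of R[x]/⟨x^m−1⟩ is generated by polynomials p_0^{(j)}(x), …, p_{r_j}^{(j)}(x), then C is generated as an ideal of S by the set { θ_j(y)·p_i^{(j)}(x) : 0 ≤ i ≤ r_j, 0 ≤ j ≤ n−1 }. -/

import Mathlib

open Polynomial

/-- `R[x]/⟨x^m - 1⟩`. -/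
abbrev Amod (R : Type*) [CommRing R] (m : ℕ) :=
  Polynomial R ⧸ Ideal.span ({X ^ m - 1} : Set (Polynomial R))

noncomputable instance (R : Type*) [CommRing R] (m : ℕ) : CommRing (Amod R m) :=
  Ideal.Quotient.commRing _

/-- `S = (R[x]/⟨x^m - 1⟩)[y]/⟨y^n - 1⟩`. -/
abbrev Smod (R : Type*) [CommRing R] (m n : ℕ) :=
  Polynomial (Amod R m) ⧸ Ideal.span ({X ^ n - 1} : Set (Polynomial (Amod R m)))

/-- The image of `ζ ∈ R` in `R[x]/⟨x^m - 1⟩`. -/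
noncomputable def zetaA {R : Type*} [CommRing R] (m : ℕ) (ζ : R) : Amod R m :=
  Ideal.Quotient.mk _ (C ζ)

/-- The idempotent `θ_j(y) = (1/n) ∑_{k=0}^{n-1} ζ^{(n-j)k} y^k` as an element of `S`. -/
noncomputable def theta {A : Type*} [CommRing A] (n : ℕ) (ζ : A) (j : ℕ) :
    Polynomial A ⧸ Ideal.span ({X ^ n - 1} : Set (Polynomial A)) :=
  Ideal.Quotient.mk _ (C (Ring.inverse (n : A)) *
    ∑ k ∈ Finset.range n, C (ζ ^ ((n - j) * k)) * X ^ k)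

section Aux
variable {A : Type*} [CommRing A] (n : ℕ) (ζ : A)

/-- The unnormalized theta polynomial. -/
noncomputable def ThetaP (j : ℕ) : Polynomial A :=
  ∑ k ∈ Finset.range n, C (ζ ^ ((n - j) * k)) * X ^ k

lemma ThetaP_mul_sub (hζ : ζ ^ n = 1) {j : ℕ} (hj : j ≤ n) :
    ThetaP n ζ j * (X - C (ζ ^ j)) = C (ζ ^ j) * (X ^ n - 1) := by
  have hw : ∀ k, (C (ζ ^ ((n - j) * k)) * X ^ k : Polynomial A)
      = (C (ζ ^ (n - j)) * X) ^ k := by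
    intro k; rw [mul_pow, ← C_pow, ← pow_mul]
  have key := geom_sum_mul (C (ζ ^ (n - j)) * X) n
  have h1 : C (ζ ^ j) * (C (ζ ^ (n - j)) * X - 1) = X - C (ζ ^ j) := by
    have hz : ζ ^ j * ζ ^ (n - j) = 1 := by
      rw [← pow_add, Nat.add_sub_cancel' hj, hζ]
    rw [mul_sub, mul_one, ← mul_assoc, ← C_mul, hz, C_1, one_mul]
  have h2 : (C (ζ ^ (n - j)) * X) ^ n = X ^ n := by
    have h3 : (ζ ^ (n - j)) ^ n = 1 := by rw [← pow_mul, mul_comm, pow_mul, hζ, one_pow]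
    rw [mul_pow, ← C_pow, h3, C_1, one_mul]
  calc ThetaP n ζ j * (X - C (ζ ^ j))
      = ThetaP n ζ j * (C (ζ ^ j) * (C (ζ ^ (n - j)) * X - 1)) := by rw [h1]
    _ = C (ζ ^ j) * ((∑ k ∈ Finset.range n, (C (ζ ^ (n - j)) * X) ^ k)
          * (C (ζ ^ (n - j)) * X - 1)) := by
        rw [ThetaP]; simp_rw [hw]; ring
    _ = C (ζ ^ j) * (X ^ n - 1) := by rw [key, h2]

lemma theta_mul_mk (hζ : ζ ^ n = 1) {j : ℕ} (hj : j ≤ n) (F : Polynomial A) :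
    theta n ζ j * Ideal.Quotient.mk _ F
      = theta n ζ j * Ideal.Quotient.mk _ (C (F.eval (ζ ^ j))) := by
  rw [theta, ← map_mul, ← map_mul, Ideal.Quotient.eq]
  obtain ⟨q, hq⟩ : (X - C (ζ ^ j)) ∣ (F - C (F.eval (ζ ^ j))) :=
    dvd_iff_isRoot.mpr (by simp [IsRoot])
  rw [Ideal.mem_span_singleton']
  refine ⟨C (Ring.inverse (n : A)) * q * C (ζ ^ j), ?_⟩
  have h := ThetaP_mul_sub n ζ hζ hj
  rw [ThetaP] at h
  linear_combination (-(C (Ring.inverse (n : A)) * q)) * h -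
    (C (Ring.inverse (n : A)) * ∑ k ∈ Finset.range n, C (ζ ^ ((n - j) * k)) * X ^ k) * hq

lemma sum_theta_eq_one (hζ : ζ ^ n = 1) (hu : IsUnit (n : A))
    (hd : ∀ k, 0 < k → k < n → IsUnit (ζ ^ k - 1)) (hn : 0 < n) :
    ∑ j ∈ Finset.range n, theta n ζ j
      = (1 : Polynomial A ⧸ Ideal.span ({X ^ n - 1} : Set (Polynomial A))) := by
  have hsum : ∑ j ∈ Finset.range n, ∑ k ∈ Finset.range n,
      (C (ζ ^ ((n - j) * k)) * X ^ k : Polynomial A) = C (n : A) := by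
    rw [Finset.sum_comm]
    have hterm : ∀ k ∈ Finset.range n,
        (∑ j ∈ Finset.range n, (C (ζ ^ ((n - j) * k)) * X ^ k : Polynomial A))
          = if k = 0 then C (n : A) else 0 := by
      intro k hk
      rw [Finset.mem_range] at hk
      rcases Nat.eq_zero_or_pos k with h0 | hpos
      · subst h0; simp [Finset.sum_const, Finset.card_range]
      · rw [if_neg hpos.ne']
        rw [← Finset.sum_mul]
        have hz : ∑ j ∈ Finset.range n, ζ ^ ((n - j) * k) = 0 := by
          have hre : ∀ j ∈ Finset.range n,
              ζ ^ ((n - j) * k) = ζ ^ k * (ζ ^ k) ^ (n - 1 - j) := by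
            intro j hj
            rw [Finset.mem_range] at hj
            rw [mul_comm (n - j), pow_mul]
            have : n - j = (n - 1 - j) + 1 := by omega
            rw [this, pow_succ]; ring
          rw [Finset.sum_congr rfl hre, ← Finset.mul_sum,
            Finset.sum_range_reflect (fun j => (ζ ^ k) ^ j) n]
          have hgeo : (∑ i ∈ Finset.range n, (ζ ^ k) ^ i) * (ζ ^ k - 1) = 0 := by
            rw [geom_sum_mul, ← pow_mul, mul_comm, pow_mul, hζ, one_pow, sub_self]
          have := ((hd k hpos hk).mul_left_eq_zero).mp hgeo
          rw [this, mul_zero]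
        rw [← map_sum, hz, map_zero, zero_mul]
    rw [Finset.sum_congr rfl hterm, Finset.sum_ite_eq' (Finset.range n) 0
      (fun _ => C (n : A))]
    simp [Finset.mem_range.mpr hn]
  simp only [theta]
  rw [← map_sum, ← Finset.mul_sum, hsum, ← C_mul, Ring.inverse_mul_cancel _ hu, C_1,
    map_one]

end Aux

/-- Every `f ∈ C` decomposes as `f = ∑_j θ_j(y)·f(x,ζ^j)` with `f(x,ζ^j) ∈ C_j`; hence
if each `C_j` is generated by `p_0^{(j)}, …, p_{r_j}^{(j)}`, then `C` is generated by
the elements `θ_j(y)·p_i^{(j)}(x)`. -/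
theorem ideal_decomposition_and_generators
    (R : Type*) [CommRing R] (m n : ℕ) (hm : 0 < m) (hn : 0 < n)
    (hunit : IsUnit (n : R)) (ζ : R) (hζ : ζ ^ n = 1)
    (hdiff : ∀ i j : ℕ, i ≤ n - 1 → j ≤ n - 1 → i ≠ j → IsUnit (ζ ^ i - ζ ^ j))
    (C : Ideal (Smod R m n)) :
    (∀ F : Polynomial (Amod R m), Ideal.Quotient.mk _ F ∈ C →
      (Ideal.Quotient.mk _ F : Smod R m n) =
        ∑ j ∈ Finset.range n,
          theta n (zetaA m ζ) j *
            Ideal.Quotient.mk _ (Polynomial.C (F.eval (zetaA m ζ ^ j))) ∧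
      ∀ j ∈ Finset.range n,
        Ideal.Quotient.mk _ (Polynomial.C (F.eval (zetaA m ζ ^ j))) *
          theta n (zetaA m ζ) j ∈ C) ∧
    (∀ (r : ℕ → ℕ) (p : ℕ → ℕ → Amod R m),
      (∀ j < n,
        {g : Amod R m |
          Ideal.Quotient.mk _ (Polynomial.C g) * theta n (zetaA m ζ) j ∈ C} =
        ↑(Ideal.span {a : Amod R m | ∃ i ≤ r j, a = p j i})) →
      C = Ideal.span
        {s : Smod R m n | ∃ j < n, ∃ i ≤ r j,
          s = theta n (zetaA m ζ) j * Ideal.Quotient.mk _ (Polynomial.C (p j i))}) := by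
  set A := Amod R m
  let φ : R →+* A := (Ideal.Quotient.mk _).comp (Polynomial.C (R := R))
  have hφζ : zetaA m ζ = φ ζ := rfl
  have hζA : zetaA m ζ ^ n = 1 := by
    rw [hφζ, ← map_pow, hζ, map_one]
  have huA : IsUnit ((n : A)) := by
    have := hunit.map φ
    rwa [map_natCast] at this
  have hdA : ∀ k, 0 < k → k < n → IsUnit (zetaA m ζ ^ k - 1) := by
    intro k hk1 hk2
    have := (hdiff k 0 (by omega) (by omega) (by omega)).map φ
    rw [map_sub, map_pow, map_pow, pow_zero] at this
    rwa [hφζ]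
  have hsum1 := sum_theta_eq_one n (zetaA m ζ) hζA huA hdA hn
  -- decomposition for arbitrary F
  have decomp : ∀ F : Polynomial A,
      (Ideal.Quotient.mk _ F : Smod R m n) =
        ∑ j ∈ Finset.range n,
          theta n (zetaA m ζ) j *
            Ideal.Quotient.mk _ (Polynomial.C (F.eval (zetaA m ζ ^ j))) := by
    intro F
    calc (Ideal.Quotient.mk _ F : Smod R m n)
        = (Ideal.Quotient.mk _ F : Smod R m n) * ∑ j ∈ Finset.range n,
            theta n (zetaA m ζ) j := by rw [hsum1, mul_one]
      _ = ∑ j ∈ Finset.range n,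
            theta n (zetaA m ζ) j * Ideal.Quotient.mk _ F := by
          rw [Finset.mul_sum]; exact Finset.sum_congr rfl fun j _ => mul_comm _ _
      _ = ∑ j ∈ Finset.range n,
            theta n (zetaA m ζ) j *
              Ideal.Quotient.mk _ (Polynomial.C (F.eval (zetaA m ζ ^ j))) := by
          refine Finset.sum_congr rfl fun j hj => ?_
          exact theta_mul_mk n (zetaA m ζ) hζA (le_of_lt (Finset.mem_range.mp hj)) F
  have memC : ∀ F : Polynomial A, Ideal.Quotient.mk _ F ∈ C → ∀ j < n,
      (Ideal.Quotient.mk _ (Polynomial.C (F.eval (zetaA m ζ ^ j))) : Smod R m n) *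
        theta n (zetaA m ζ) j ∈ C := by
    intro F hF j hj
    have h := theta_mul_mk n (zetaA m ζ) hζA (le_of_lt hj) F
    rw [mul_comm, ← h, mul_comm]
    exact Ideal.mul_mem_right _ _ hF
  refine ⟨fun F hF => ⟨decomp F, fun j hj => memC F hF j (Finset.mem_range.mp hj)⟩, ?_⟩
  intro r p hp
  apply le_antisymm
  · -- C ≤ span of generators
    intro f hf
    obtain ⟨F, rfl⟩ := Ideal.Quotient.mk_surjective f
    rw [decomp F]
    apply Ideal.sum_mem
    intro j hj
    rw [Finset.mem_range] at hj
    have hev : F.eval (zetaA m ζ ^ j) ∈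
        Ideal.span {a : A | ∃ i ≤ r j, a = p j i} := by
      have h1 : F.eval (zetaA m ζ ^ j) ∈
          {g : A | Ideal.Quotient.mk _ (Polynomial.C g) * theta n (zetaA m ζ) j ∈ C} :=
        memC F hf j hj
      rw [hp j hj] at h1
      exact h1
    -- span induction
    refine Submodule.span_induction
      (p := fun g _ => theta n (zetaA m ζ) j *
        Ideal.Quotient.mk _ (Polynomial.C g) ∈ Ideal.span
        {s : Smod R m n | ∃ j' < n, ∃ i ≤ r j',
          s = theta n (zetaA m ζ) j' * Ideal.Quotient.mk _ (Polynomial.C (p j' i))})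
      ?_ ?_ ?_ ?_ hev
    · rintro g ⟨i, hi, rfl⟩
      beta_reduce
      exact Ideal.subset_span ⟨j, hj, i, hi, rfl⟩
    · beta_reduce
      rw [map_zero, map_zero, mul_zero]
      exact Ideal.zero_mem _
    · intro x y _ _ hx hy
      beta_reduce at hx hy ⊢
      have heq : (Ideal.Quotient.mk _ (Polynomial.C (x + y)) : Smod R m n)
          = Ideal.Quotient.mk _ (Polynomial.C x) + Ideal.Quotient.mk _ (Polynomial.C y) := by
        rw [map_add, map_add]
      rw [heq, mul_add]
      exact Ideal.add_mem _ hx hy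
    · intro a x _ hx
      beta_reduce at hx ⊢
      have heq : theta n (zetaA m ζ) j *
          (Ideal.Quotient.mk _ (Polynomial.C (a • x)) : Smod R m n)
          = Ideal.Quotient.mk _ (Polynomial.C a) *
            (theta n (zetaA m ζ) j * Ideal.Quotient.mk _ (Polynomial.C x)) := by
        rw [smul_eq_mul, map_mul, map_mul]; ring
      rw [heq]
      exact Ideal.mul_mem_left _ _ hx
  · rw [Ideal.span_le]
    rintro s ⟨j, hj, i, hi, rfl⟩
    have h1 : p j i ∈
        {g : A | Ideal.Quotient.mk _ (Polynomial.C g) * theta n (zetaA m ζ) j ∈ C} := by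
      rw [hp j hj]
      exact Ideal.subset_span ⟨i, hi, rfl⟩
    have h2 : (Ideal.Quotient.mk _ (Polynomial.C (p j i)) : Smod R m n) *
        theta n (zetaA m ζ) j ∈ C := h1
    rwa [mul_comm] at h2
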